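/- There exists a universal constant C > 0 such that for all integers k ≥ 1 and all integers D > √6 · k^{7/4}, the Gram matrix G_D is invertible and the unitary Weingarten function at the identity permutation satisfies |Wg^U(id, D) − D^{−k}| ≤ C · k^{7/2} · D^{−(k+2)}. -/

import Mathlib

open Matrix

/-- The number of cycles of a permutation, counting fixed points as (trivial) cycles. -/
def numCycles {k : ℕ} (σ : Equiv.Perm (Fin k)) : ℕ :=
  Multiset.card σ.cycleType + (k - σ.support.card)

/-- The Gram matrix `G_D(σ,τ) = D^{#(σ⁻¹τ)}` on permutations of `{1,…,k}`. -/
def permGram (k D : ℕ) : Matrix (Equiv.Perm (Fin k)) (Equiv.Perm (Fin k)) ℝ :=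
  fun σ τ => (D : ℝ) ^ numCycles (σ⁻¹ * τ)

namespace WgAux

open Equiv Equiv.Perm Finset

variable {k : ℕ}


/-- Key cycle-splitting lemma: if `x j = i` with `j ≠ i`, then multiplying by `swap j i`
splits a cycle, increasing the cycle count by one. -/
lemma numCycles_mul_swap (x : Equiv.Perm (Fin k)) {j i : Fin k}
    (hji : j ≠ i) (hx : x j = i) :
    numCycles (x * Equiv.swap j i) = numCycles x + 1 := by
  have hxi_ne : x i ≠ i := fun h => hji (x.injective (hx.trans h.symm))
  have hxj_ne : x j ≠ j := by rw [hx]; exact fun h => hji h.symm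
  have hsx : x.support.card ≤ k := by
    simpa using (Finset.card_le_card (Finset.subset_univ x.support))
  by_cases hxi : x i = j
  · -- 2-cycle case: y := x * swap j i fixes both i and j
    set y := x * Equiv.swap j i with hy
    have hyi : y i = i := by simp [hy, Equiv.swap_apply_right, hx]
    have hyj : y j = j := by simp [hy, Equiv.swap_apply_left, hxi]
    have hdisj : (Equiv.Perm.Disjoint y (Equiv.swap j i)) := by
      intro a
      by_cases haj : a = j
      · exact Or.inl (haj ▸ hyj)
      by_cases hai : a = i
      · exact Or.inl (hai ▸ hyi)
      · exact Or.inr (Equiv.swap_apply_of_ne_of_ne haj hai)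
    have hxy : x = y * Equiv.swap j i := by
      rw [hy, mul_assoc, Equiv.swap_mul_self, mul_one]
    have hct : x.cycleType = y.cycleType + (Equiv.swap j i).cycleType := by
      rw [hxy]; exact hdisj.cycleType_mul
    have hctswap : (Equiv.swap j i).cycleType = {2} := by
      have hc : (Equiv.swap j i).IsCycle := Equiv.Perm.isCycle_swap hji
      rw [hc.cycleType, Equiv.Perm.card_support_swap hji]
    have hsupp : x.support.card = y.support.card + 2 := by
      rw [hxy, hdisj.card_support_mul, Equiv.Perm.card_support_swap hji]
    have hctc : Multiset.card x.cycleType = Multiset.card y.cycleType + 1 := by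
      rw [hct, hctswap]; simp
    unfold numCycles
    rw [hctc]
    have hsy : y.support.card + 2 ≤ k := hsupp ▸ hsx
    omega
  · -- long cycle case
    classical
    have hjs : j ∈ x.support := Equiv.Perm.mem_support.2 hxj_ne
    set c := x.cycleOf j with hc
    have hmem : c ∈ x.cycleFactorsFinset :=
      (Equiv.Perm.cycleOf_mem_cycleFactorsFinset_iff).2 hjs
    set z := x * c⁻¹ with hz
    have hdzc : Equiv.Perm.Disjoint z c :=
      Equiv.Perm.disjoint_mul_inv_of_mem_cycleFactorsFinset hmem
    have hzc : z * c = x := by rw [hz, inv_mul_cancel_right]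
    have hcyc : c.IsCycle := Equiv.Perm.isCycle_cycleOf x hxj_ne
    have hcj : c j = i := by rw [hc, Equiv.Perm.cycleOf_apply_self, hx]
    have hsc1 : x.SameCycle j i := ⟨1, by simpa using hx⟩
    have hci : c i = x i := by rw [hc, Equiv.Perm.cycleOf_apply, if_pos hsc1]
    have hsc2 : x.SameCycle j (x i) := ⟨2, by rw [show (2:ℤ) = 1 + 1 by norm_num, _root_.zpow_add, zpow_one]; simp [hx]⟩
    have hcxi : c (x i) = x (x i) := by rw [hc, Equiv.Perm.cycleOf_apply, if_pos hsc2]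
    have hcine : c i ≠ i := by rw [hci]; exact hxi_ne
    have hcci : c (c i) ≠ i := by
      rw [hci, hcxi]
      intro h
      exact hxi (x.injective (h.trans hx.symm))
    -- g = swap i (c i) * c = c * swap j i
    have hg : c * Equiv.swap j i = Equiv.swap i (c i) * c := by
      rw [Equiv.mul_swap_eq_swap_mul, hcj, hci]
    have hgcyc : (Equiv.swap i (c i) * c).IsCycle := hcyc.swap_mul hcine hcci
    have hgsupp : (Equiv.swap i (c i) * c).support = c.support \ {i} :=
      Equiv.Perm.support_swap_mul_eq c i hcci
    have hisupp : i ∈ c.support := Equiv.Perm.mem_support.2 hcine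
    have hgcard : (Equiv.swap i (c i) * c).support.card = c.support.card - 1 := by
      rw [hgsupp, Finset.sdiff_singleton_eq_erase, Finset.card_erase_of_mem hisupp]
    have hdzg : Equiv.Perm.Disjoint z (Equiv.swap i (c i) * c) := by
      rw [Equiv.Perm.disjoint_iff_disjoint_support] at hdzc ⊢
      exact hdzc.mono_right (by rw [hgsupp]; exact Finset.sdiff_subset)
    have hfact : x * Equiv.swap j i = z * (Equiv.swap i (c i) * c) := by
      rw [← hzc, mul_assoc, hg]
    have hctx : x.cycleType = z.cycleType + c.cycleType := by
      rw [← hzc]; exact hdzc.cycleType_mul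
    have hcty : (x * Equiv.swap j i).cycleType
        = z.cycleType + (Equiv.swap i (c i) * c).cycleType := by
      rw [hfact]; exact hdzg.cycleType_mul
    have hctcard : Multiset.card c.cycleType = 1 := by
      rw [hcyc.cycleType]; rfl
    have hctgcard : Multiset.card (Equiv.swap i (c i) * c).cycleType = 1 := by
      rw [hgcyc.cycleType]; rfl
    have hsuppx : x.support.card = z.support.card + c.support.card := by
      rw [← hzc]; exact hdzc.card_support_mul
    have hsuppy : (x * Equiv.swap j i).support.card
        = z.support.card + (c.support.card - 1) := by
      rw [hfact, hdzg.card_support_mul, hgcard]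
    have hscpos : 1 ≤ c.support.card := Finset.card_pos.2 ⟨i, hisupp⟩
    unfold numCycles
    rw [hcty, hctx, Multiset.card_add, Multiset.card_add, hctcard, hctgcard, hsuppy]
    rw [hsuppx] at hsx
    omega




/-- The matrix of right translation by `π`. -/
def permMat (k : ℕ) (π : Equiv.Perm (Fin k)) :
    Matrix (Equiv.Perm (Fin k)) (Equiv.Perm (Fin k)) ℝ :=
  fun σ τ => if τ = σ * π then 1 else 0

lemma mul_permMat_apply (X : Matrix (Equiv.Perm (Fin k)) (Equiv.Perm (Fin k)) ℝ)
    (π : Equiv.Perm (Fin k)) (σ τ : Equiv.Perm (Fin k)) :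
    (X * permMat k π) σ τ = X σ (τ * π⁻¹) := by
  rw [Matrix.mul_apply]
  unfold permMat
  rw [Finset.sum_eq_single (τ * π⁻¹)]
  · rw [if_pos (by group), mul_one]
  · intro μ _ hμ
    rw [if_neg, mul_zero]
    intro h
    exact hμ (by rw [h]; group)
  · intro h; exact absurd (Finset.mem_univ _) h

/-- The Jucys–Murphy matrix for index `i`. -/
def jmMat (k : ℕ) (i : Fin k) :
    Matrix (Equiv.Perm (Fin k)) (Equiv.Perm (Fin k)) ℝ :=
  ∑ j ∈ Finset.univ.filter (fun j => j < i), permMat k (Equiv.swap j i)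

/-- The factor `D•1 + J_i`. -/
def fac (k D : ℕ) (i : Fin k) :
    Matrix (Equiv.Perm (Fin k)) (Equiv.Perm (Fin k)) ℝ :=
  (D : ℝ) • (1 : Matrix (Equiv.Perm (Fin k)) (Equiv.Perm (Fin k)) ℝ) + jmMat k i

/-- partial products of the factors, in increasing order. -/
def PP (k D m : ℕ) : Matrix (Equiv.Perm (Fin k)) (Equiv.Perm (Fin k)) ℝ :=
  (((List.finRange k).take m).map (fac k D)).prod

def Fix (k m : ℕ) (x : Equiv.Perm (Fin k)) : Prop :=
  ∀ t : Fin k, m ≤ (t : ℕ) → x t = t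

instance (k m : ℕ) : DecidablePred (Fix k m) := fun x => by
  unfold Fix; infer_instance

lemma fix_mono {m : ℕ} {x : Equiv.Perm (Fin k)} (h : Fix k m x) : Fix k (m + 1) x :=
  fun t ht => h t (by omega)

lemma fix_one (m : ℕ) : Fix k m (1 : Equiv.Perm (Fin k)) := fun _ _ => rfl

lemma fix_mul {m : ℕ} {x y : Equiv.Perm (Fin k)} (hx : Fix k m x) (hy : Fix k m y) :
    Fix k m (x * y) := fun t ht => by
  simp only [Equiv.Perm.mul_apply, hy t ht, hx t ht]

lemma mul_fac_apply (X : Matrix (Equiv.Perm (Fin k)) (Equiv.Perm (Fin k)) ℝ)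
    (D : ℕ) (i : Fin k) (σ τ : Equiv.Perm (Fin k)) :
    (X * fac k D i) σ τ
      = (D : ℝ) * X σ τ
        + ∑ j ∈ Finset.univ.filter (fun j => j < i), X σ (τ * Equiv.swap j i) := by
  unfold fac jmMat
  rw [Matrix.mul_add, Matrix.mul_sum, Matrix.add_apply, Matrix.sum_apply]
  congr 1
  · rw [Matrix.mul_smul, mul_one, Matrix.smul_apply, smul_eq_mul]
  · refine Finset.sum_congr rfl fun j _ => ?_
    rw [mul_permMat_apply, Equiv.swap_inv]

lemma PP_succ (k D m : ℕ) (hm : m < k) :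
    PP k D (m + 1) = PP k D m * fac k D ⟨m, hm⟩ := by
  unfold PP
  rw [List.take_succ, List.getElem?_eq_getElem (by simpa using hm)]
  simp

lemma numCycles_one : numCycles (1 : Equiv.Perm (Fin k)) = k := by
  unfold numCycles
  simp

lemma PP_entry (k D : ℕ) (hD : (D : ℝ) ≠ 0) (m : ℕ) (hmk : m ≤ k)
    (σ τ : Equiv.Perm (Fin k)) :
    (D : ℝ) ^ (k - m) * PP k D m σ τ
      = if Fix k m (σ⁻¹ * τ) then (D : ℝ) ^ numCycles (σ⁻¹ * τ) else 0 := by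
  induction m generalizing σ τ with
  | zero =>
    unfold PP
    simp only [List.take_zero, List.map_nil, List.prod_nil, Nat.sub_zero]
    by_cases h : σ = τ
    · subst h
      rw [Matrix.one_apply_eq, mul_one, if_pos (by rw [inv_mul_cancel]; exact fix_one 0)]
      rw [inv_mul_cancel, numCycles_one]
    · rw [Matrix.one_apply_ne h, mul_zero, if_neg]
      intro hfix
      apply h
      have : σ⁻¹ * τ = 1 := Equiv.ext fun t => hfix t (Nat.zero_le _)
      have := congrArg (σ * ·) this
      simpa [mul_assoc] using this.symm
  | succ m ih =>
    have hm : m < k := hmk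
    set i : Fin k := ⟨m, hm⟩ with hidef
    have ival : (i : ℕ) = m := rfl
    apply mul_left_cancel₀ hD
    have hpow : (D : ℝ) * (D : ℝ) ^ (k - (m + 1)) = (D : ℝ) ^ (k - m) := by
      rw [← pow_succ']
      congr 1
      omega
    rw [← mul_assoc, hpow, PP_succ k D m hm, mul_fac_apply]
    set x := σ⁻¹ * τ with hx
    have hterm : ∀ j : Fin k, σ⁻¹ * (τ * Equiv.swap j i) = x * Equiv.swap j i := by
      intro j; rw [hx, mul_assoc]
    rw [mul_add, Finset.mul_sum]
    have hmain : (D : ℝ) ^ (k - m) * ((D : ℝ) * PP k D m σ τ)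
        = (D : ℝ) * (if Fix k m x then (D : ℝ) ^ numCycles x else 0) := by
      rw [← ih (by omega)]
      ring
    rw [hmain]
    have hsum : ∀ j ∈ Finset.univ.filter (fun j => j < i),
        (D : ℝ) ^ (k - m) * PP k D m σ (τ * Equiv.swap j i)
          = if Fix k m (x * Equiv.swap j i) then
              (D : ℝ) ^ numCycles (x * Equiv.swap j i) else 0 := by
      intro j _
      rw [ih (by omega), hterm j]
    rw [Finset.sum_congr rfl hsum]
    by_cases hfix : Fix k (m + 1) x
    · by_cases hxi : x i = i
      · -- case A
        have hfixm : Fix k m x := by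
          intro t ht
          rcases Nat.eq_or_lt_of_le ht with h | h
          · have : t = i := Fin.ext h.symm
            rw [this]; exact hxi
          · exact hfix t h
        rw [if_pos hfixm, if_pos hfix]
        rw [Finset.sum_eq_zero, add_zero]
        intro j hj
        rw [if_neg]
        intro hF
        have hj' : j < i := (Finset.mem_filter.1 hj).2
        have : (x * Equiv.swap j i) i = i := hF i (le_of_eq ival.symm)
        rw [Equiv.Perm.mul_apply, Equiv.swap_apply_right] at this
        exact absurd (x.injective (this.trans hxi.symm)) (ne_of_lt hj')
      · -- case B
        set j0 : Fin k := x⁻¹ i with hj0def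
        have hxj0 : x j0 = i := x.apply_symm_apply i
        have hj0i : j0 ≠ i := fun h => hxi (h ▸ hxj0)
        have hj0m : (j0 : ℕ) < m := by
          by_contra hcon
          push_neg at hcon
          rcases Nat.eq_or_lt_of_le hcon with h | h
          · exact hj0i (Fin.ext h.symm)
          · exact hj0i (((hfix j0 h) ▸ hxj0 : (j0 : Fin k) = i)) -- x j0 = j0 → i = j0
        have hj0lt : j0 < i := by rw [Fin.lt_def, ival]; exact hj0m
        rw [if_neg (fun hF => hxi (hF i (le_of_eq ival.symm))), if_pos hfix]
        have hj0mem : j0 ∈ Finset.univ.filter (fun j => j < i) :=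
          Finset.mem_filter.2 ⟨Finset.mem_univ j0, hj0lt⟩
        rw [Finset.sum_eq_single_of_mem j0 hj0mem ?_]
        · have hFj0 : Fix k m (x * Equiv.swap j0 i) := by
            intro t ht
            by_cases hti : t = i
            · rw [hti, Equiv.Perm.mul_apply, Equiv.swap_apply_right, hxj0]
            · have htm1 : m + 1 ≤ (t : ℕ) := by
                rcases Nat.eq_or_lt_of_le ht with h | h
                · exact absurd (Fin.ext h.symm) hti
                · exact h
              have htj0 : t ≠ j0 := fun h => by
                rw [h] at htm1; omega
              rw [Equiv.Perm.mul_apply, Equiv.swap_apply_of_ne_of_ne htj0 hti]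
              exact hfix t htm1
          rw [if_pos hFj0, numCycles_mul_swap x hj0i hxj0, pow_succ]
          ring
        · intro j hj hjne
          rw [if_neg]
          intro hF
          have : (x * Equiv.swap j i) i = i := hF i (le_of_eq ival.symm)
          rw [Equiv.Perm.mul_apply, Equiv.swap_apply_right] at this
          exact hjne (x.injective (this.trans hxj0.symm))
    · -- case C
      rw [if_neg hfix, if_neg (fun h => hfix (fix_mono h))]
      simp only [mul_zero, zero_add]
      apply Finset.sum_eq_zero
      intro j hj
      have hj' : j < i := (Finset.mem_filter.1 hj).2
      rw [if_neg]
      intro hF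
      apply hfix
      intro t ht
      have hti : t ≠ i := fun h => by rw [h, ival] at ht; omega
      have htj : t ≠ j := fun h => by
        rw [Fin.lt_def, ival] at hj'
        rw [h] at ht; omega
      have : x t = (x * Equiv.swap j i) ((Equiv.swap j i) t) := by
        simp [Equiv.Perm.mul_apply]
      rw [this, Equiv.swap_apply_of_ne_of_ne htj hti]
      exact hF t (by omega)

lemma permGram_eq_prod (k D : ℕ) (hD : (D : ℝ) ≠ 0) :
    permGram k D = ((List.finRange k).map (fac k D)).prod := by
  ext σ τ
  have h := PP_entry k D hD k le_rfl σ τ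
  rw [Nat.sub_self, pow_zero, one_mul] at h
  unfold PP at h
  rw [List.take_of_length_le (by simp)] at h
  rw [h, if_pos]
  · rfl
  · intro t ht
    exact absurd t.isLt (not_lt.2 ht)






/-- number of transpositions in the `i`-th JM element -/
def nJ (k : ℕ) (i : Fin k) : ℕ := (Finset.univ.filter (fun j => j < i)).card

lemma nJ_lt (i : Fin k) : nJ k i < k := by
  have h : Finset.univ.filter (fun j => j < i) ⊂ Finset.univ := by
    refine Finset.ssubset_univ_iff.2 ?_
    intro h
    have := h ▸ Finset.mem_univ i
    exact absurd (Finset.mem_filter.1 this).2 (lt_irrefl i)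
  simpa [nJ, Fintype.card_fin] using Finset.card_lt_card h

lemma permMat_mul_apply (X : Matrix (Equiv.Perm (Fin k)) (Equiv.Perm (Fin k)) ℝ)
    (π : Equiv.Perm (Fin k)) (σ τ : Equiv.Perm (Fin k)) :
    (permMat k π * X) σ τ = X (σ * π) τ := by
  rw [Matrix.mul_apply]
  unfold permMat
  rw [Finset.sum_eq_single (σ * π)]
  · rw [if_pos rfl, one_mul]
  · intro μ _ hμ
    rw [if_neg hμ, zero_mul]
  · intro h; exact absurd (Finset.mem_univ _) h

/-- translation invariance -/
def TI (X : Matrix (Equiv.Perm (Fin k)) (Equiv.Perm (Fin k)) ℝ) : Prop :=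
  ∀ ρ σ τ : Equiv.Perm (Fin k), X (ρ * σ) (ρ * τ) = X σ τ

lemma TI_permMat (π : Equiv.Perm (Fin k)) : TI (permMat k π) := by
  intro ρ σ τ
  unfold permMat
  congr 1
  rw [eq_iff_iff]
  constructor
  · intro h; exact mul_left_cancel (by rw [h, mul_assoc])
  · intro h; rw [h, mul_assoc]

lemma TI_one : TI (1 : Matrix (Equiv.Perm (Fin k)) (Equiv.Perm (Fin k)) ℝ) := by
  intro ρ σ τ
  by_cases h : σ = τ
  · rw [h, Matrix.one_apply_eq, Matrix.one_apply_eq]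
  · rw [Matrix.one_apply_ne h, Matrix.one_apply_ne (fun hc => h (mul_left_cancel hc))]

lemma TI_mul {X Y : Matrix (Equiv.Perm (Fin k)) (Equiv.Perm (Fin k)) ℝ}
    (hX : TI X) (hY : TI Y) : TI (X * Y) := by
  intro ρ σ τ
  rw [Matrix.mul_apply, Matrix.mul_apply]
  refine Fintype.sum_equiv (Equiv.mulLeft ρ⁻¹) _ _ (fun μ => ?_)
  simp only [Equiv.coe_mulLeft]
  rw [← hX ρ σ (ρ⁻¹ * μ), ← hY ρ (ρ⁻¹ * μ) τ, mul_inv_cancel_left]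

lemma TI_jmMat (i : Fin k) : TI (jmMat k i) := by
  intro ρ σ τ
  unfold jmMat
  rw [Matrix.sum_apply, Matrix.sum_apply]
  exact Finset.sum_congr rfl fun j _ => TI_permMat (Equiv.swap j i) ρ σ τ

lemma TI_pow (i : Fin k) (m : ℕ) : TI (jmMat k i ^ m) := by
  induction m with
  | zero => exact TI_one
  | succ m ih => rw [pow_succ]; exact TI_mul ih (TI_jmMat i)

lemma jmMat_pow_nonneg (i : Fin k) (m : ℕ) (σ τ : Equiv.Perm (Fin k)) :
    0 ≤ (jmMat k i ^ m) σ τ := by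
  induction m generalizing σ τ with
  | zero =>
    rw [pow_zero]
    by_cases h : σ = τ
    · rw [h, Matrix.one_apply_eq]; norm_num
    · rw [Matrix.one_apply_ne h]
  | succ m ih =>
    rw [pow_succ, Matrix.mul_apply]
    refine Finset.sum_nonneg fun μ _ => mul_nonneg (ih σ μ) ?_
    unfold jmMat
    rw [Matrix.sum_apply]
    unfold permMat
    refine Finset.sum_nonneg fun j _ => by positivity

lemma jmMat_pow_rowsum (i : Fin k) (m : ℕ) (σ : Equiv.Perm (Fin k)) :
    ∑ τ, (jmMat k i ^ m) σ τ = ((nJ k i : ℝ)) ^ m := by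
  induction m generalizing σ with
  | zero =>
    rw [pow_zero, pow_zero]
    simp [Matrix.one_apply]
  | succ m ih =>
    rw [pow_succ']
    have : ∀ τ, (jmMat k i * jmMat k i ^ m) σ τ
        = ∑ j ∈ Finset.univ.filter (fun j => j < i), (jmMat k i ^ m) (σ * Equiv.swap j i) τ := by
      intro τ
      unfold jmMat
      rw [Matrix.sum_mul, Matrix.sum_apply]
      exact Finset.sum_congr rfl fun j _ => permMat_mul_apply _ _ _ _
    rw [Finset.sum_congr rfl fun τ _ => this τ, Finset.sum_comm]
    rw [Finset.sum_congr rfl fun j _ => ih (σ * Equiv.swap j i)]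
    rw [Finset.sum_const, nsmul_eq_mul, pow_succ']
    rfl

lemma jmMat_pow_le (i : Fin k) (m : ℕ) (σ τ : Equiv.Perm (Fin k)) :
    (jmMat k i ^ m) σ τ ≤ ((nJ k i : ℝ)) ^ m := by
  rw [← jmMat_pow_rowsum i m σ]
  exact Finset.single_le_sum (fun μ _ => jmMat_pow_nonneg i m σ μ) (Finset.mem_univ τ)

variable (D : ℕ)

/-- The inverse of `1 + D⁻¹ J_i` as an entrywise geometric series. -/
noncomputable def Binv (k D : ℕ) (i : Fin k) :
    Matrix (Equiv.Perm (Fin k)) (Equiv.Perm (Fin k)) ℝ :=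
  fun σ τ => ∑' m : ℕ, (-(D : ℝ)⁻¹) ^ m * ((jmMat k i ^ m) σ τ)

lemma summable_abs_series (i : Fin k) (hD : (nJ k i : ℝ) < (D : ℝ)) (σ τ : Equiv.Perm (Fin k)) :
    Summable (fun m : ℕ => ((D : ℝ)⁻¹) ^ m * ((jmMat k i ^ m) σ τ)) := by
  have hD0 : (0 : ℝ) < (D : ℝ) := lt_of_le_of_lt (Nat.cast_nonneg _) hD
  refine Summable.of_nonneg_of_le
    (fun m => mul_nonneg (by positivity) (jmMat_pow_nonneg i m σ τ))
    (fun m => ?_) (summable_geometric_of_lt_one (r := (nJ k i : ℝ) / D)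
      (by positivity) ((div_lt_one hD0).2 hD))
  calc ((D : ℝ)⁻¹) ^ m * ((jmMat k i ^ m) σ τ)
      ≤ ((D : ℝ)⁻¹) ^ m * ((nJ k i : ℝ)) ^ m :=
        mul_le_mul_of_nonneg_left (jmMat_pow_le i m σ τ) (by positivity)
    _ = ((nJ k i : ℝ) / D) ^ m := by rw [div_pow, ← mul_pow]; ring_nf

lemma summable_signed_series (i : Fin k) (hD : (nJ k i : ℝ) < (D : ℝ)) (σ τ : Equiv.Perm (Fin k)) :
    Summable (fun m : ℕ => (-(D : ℝ)⁻¹) ^ m * ((jmMat k i ^ m) σ τ)) := by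
  refine Summable.of_abs ?_
  have : (fun m : ℕ => |(-(D : ℝ)⁻¹) ^ m * ((jmMat k i ^ m) σ τ)|)
      = fun m : ℕ => ((D : ℝ)⁻¹) ^ m * ((jmMat k i ^ m) σ τ) := by
    funext m
    rw [abs_mul, abs_pow, abs_neg, abs_inv, Nat.abs_cast,
      abs_of_nonneg (jmMat_pow_nonneg i m σ τ)]
  rw [this]
  exact summable_abs_series D i hD σ τ

lemma one_add_mul_Binv (i : Fin k) (hD : (nJ k i : ℝ) < (D : ℝ)) :
    (1 + (D : ℝ)⁻¹ • jmMat k i) * Binv k D i = 1 := by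
  ext σ τ
  rw [Matrix.add_mul, Matrix.one_mul, Matrix.add_apply, Matrix.smul_mul, Matrix.smul_apply,
    Matrix.mul_apply]
  have hswap : ∀ μ, jmMat k i σ μ * Binv k D i μ τ
      = ∑' m : ℕ, jmMat k i σ μ * ((-(D : ℝ)⁻¹) ^ m * ((jmMat k i ^ m) μ τ)) := by
    intro μ
    unfold Binv
    rw [tsum_mul_left]
  rw [Finset.sum_congr rfl fun μ _ => hswap μ]
  rw [← Summable.tsum_finsetSum (fun μ _ => Summable.mul_left _ (summable_signed_series D i hD μ τ))]
  have hkey : ∀ m : ℕ, (∑ μ, jmMat k i σ μ * ((-(D : ℝ)⁻¹) ^ m * ((jmMat k i ^ m) μ τ)))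
      = (-(D : ℝ)⁻¹) ^ m * ((jmMat k i ^ (m + 1)) σ τ) := by
    intro m
    rw [pow_succ', Matrix.mul_apply, Finset.mul_sum]
    exact Finset.sum_congr rfl fun μ _ => by ring
  rw [tsum_congr hkey]
  have hBinv : Binv k D i σ τ
      = (1 : Matrix (Equiv.Perm (Fin k)) (Equiv.Perm (Fin k)) ℝ) σ τ
        + (-(D : ℝ)⁻¹) * ∑' m : ℕ, (-(D : ℝ)⁻¹) ^ m * ((jmMat k i ^ (m + 1)) σ τ) := by
    unfold Binv
    rw [Summable.tsum_eq_zero_add (summable_signed_series D i hD σ τ)]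
    rw [pow_zero, pow_zero, one_mul]
    congr 1
    rw [← tsum_mul_left]
    exact tsum_congr fun m => by rw [pow_succ']; ring
  rw [hBinv, smul_eq_mul]
  ring

/-- right inverse of the factor -/
lemma fac_mul_inv (i : Fin k) (hD : (nJ k i : ℝ) < (D : ℝ)) (hD0 : (D : ℝ) ≠ 0) :
    fac k D i * ((D : ℝ)⁻¹ • Binv k D i) = 1 := by
  have hfac : fac k D i = (D : ℝ) • (1 + (D : ℝ)⁻¹ • jmMat k i) := by
    unfold fac
    rw [smul_add, smul_smul, mul_inv_cancel₀ hD0, one_smul]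
  rw [hfac, Matrix.smul_mul, Matrix.mul_smul, smul_smul, mul_inv_cancel₀ hD0, one_smul,
    one_add_mul_Binv D i hD]

lemma list_prod_inv {M : Type*} [Monoid M] (l : List (Fin k)) (f g : Fin k → M)
    (h : ∀ i ∈ l, f i * g i = 1) :
    (l.map f).prod * ((l.reverse.map g)).prod = 1 := by
  induction l with
  | nil => simp
  | cons a l ih =>
    simp only [List.map_cons, List.prod_cons, List.reverse_cons, List.map_append,
      List.prod_append, List.map_cons, List.prod_cons, List.map_nil, List.prod_nil, mul_one]
    have h1 : (l.map f).prod * ((l.reverse.map g)).prod = 1 :=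
      ih (fun i hi => h i (List.mem_cons_of_mem a hi))
    calc f a * (l.map f).prod * ((l.reverse.map g).prod * g a)
        = f a * ((l.map f).prod * (l.reverse.map g).prod) * g a := by
          rw [mul_assoc, mul_assoc, mul_assoc]
      _ = f a * g a := by rw [h1, mul_one]
      _ = 1 := h a List.mem_cons_self

/-- the candidate inverse of the Gram matrix -/
noncomputable def Wmat (k D : ℕ) : Matrix (Equiv.Perm (Fin k)) (Equiv.Perm (Fin k)) ℝ :=
  (((List.finRange k).reverse).map (fun i => (D : ℝ)⁻¹ • Binv k D i)).prod

lemma permGram_mul_Wmat (hkD : (k : ℝ) ≤ (D : ℝ)) (hD0 : (D : ℝ) ≠ 0) :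
    permGram k D * Wmat k D = 1 := by
  have hfac : ∀ i ∈ List.finRange k, fac k D i * ((D : ℝ)⁻¹ • Binv k D i) = 1 := by
    intro i _
    refine fac_mul_inv D i ?_ hD0
    calc (nJ k i : ℝ) < (k : ℝ) := by exact_mod_cast nJ_lt i
      _ ≤ (D : ℝ) := hkD
  rw [permGram_eq_prod k D hD0]
  exact list_prod_inv (List.finRange k) _ _ hfac


lemma isUnit_permGram (hkD : (k : ℝ) ≤ (D : ℝ)) (hD0 : (D : ℝ) ≠ 0) :
    IsUnit (permGram k D) := by
  have h := permGram_mul_Wmat D hkD hD0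
  have hdet : (permGram k D).det * (Wmat k D).det = 1 := by
    rw [← Matrix.det_mul, h, Matrix.det_one]
  exact (Matrix.isUnit_iff_isUnit_det _).2 (IsUnit.of_mul_eq_one _ hdet)

lemma permGram_inv_eq (hkD : (k : ℝ) ≤ (D : ℝ)) (hD0 : (D : ℝ) ≠ 0) :
    (permGram k D)⁻¹ = Wmat k D :=
  Matrix.inv_eq_right_inv (permGram_mul_Wmat D hkD hD0)

-- ## Part 4: the estimate

noncomputable def Qmat (k D m : ℕ) : Matrix (Equiv.Perm (Fin k)) (Equiv.Perm (Fin k)) ℝ :=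
  (((List.finRange k).take m).reverse.map (fun i => Binv k D i)).prod

lemma Qmat_succ (D m : ℕ) (hm : m < k) :
    Qmat k D (m + 1) = Binv k D ⟨m, hm⟩ * Qmat k D m := by
  unfold Qmat
  rw [List.take_succ, List.getElem?_eq_getElem (by simpa using hm)]
  simp [List.reverse_append]

lemma TI_listprod (l : List (Fin k)) (f : Fin k → Matrix (Equiv.Perm (Fin k)) (Equiv.Perm (Fin k)) ℝ)
    (h : ∀ i, TI (f i)) : TI ((l.map f).prod) := by
  induction l with
  | nil => simpa using TI_one
  | cons a l ih =>
    rw [List.map_cons, List.prod_cons]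
    exact TI_mul (h a) ih

lemma TI_Binv (D : ℕ) (i : Fin k) : TI (Binv k D i) := by
  intro ρ σ τ
  unfold Binv
  exact tsum_congr fun m => by rw [TI_pow i m ρ σ τ]

lemma TI_Qmat (D m : ℕ) : TI (Qmat k D m) :=
  TI_listprod _ _ (TI_Binv D)

lemma smul_map_prod (c : ℝ) (l : List (Fin k))
    (f : Fin k → Matrix (Equiv.Perm (Fin k)) (Equiv.Perm (Fin k)) ℝ) :
    (l.map (fun i => c • f i)).prod = c ^ l.length • (l.map f).prod := by
  induction l with
  | nil => simp
  | cons a l ih =>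
    rw [List.map_cons, List.prod_cons, ih, List.map_cons, List.prod_cons, List.length_cons,
      Matrix.smul_mul, Matrix.mul_smul, smul_smul, pow_succ']

lemma Wmat_eq (k D : ℕ) : Wmat k D = ((D : ℝ)⁻¹) ^ k • Qmat k D k := by
  unfold Wmat Qmat
  rw [List.take_of_length_le (by simp), smul_map_prod]
  simp

/-- pinned walk sums -/
noncomputable def Spin (k : ℕ) (i : Fin k) (m : ℕ) (t : Fin k) : ℝ :=
  ∑ π : Equiv.Perm (Fin k), if π i = t then (jmMat k i ^ m) 1 π else 0

lemma pow_entry_rec (i : Fin k) (m : ℕ) (π : Equiv.Perm (Fin k)) :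
    (jmMat k i ^ (m + 1)) 1 π
      = ∑ j ∈ Finset.univ.filter (fun j => j < i),
          (jmMat k i ^ m) 1 (Equiv.swap j i * π) := by
  rw [pow_succ']
  have expand : jmMat k i * (jmMat k i ^ m)
      = ∑ j ∈ Finset.univ.filter (fun j => j < i),
          permMat k (Equiv.swap j i) * (jmMat k i ^ m) := by
    unfold jmMat
    rw [Matrix.sum_mul]
  rw [expand, Matrix.sum_apply]
  refine Finset.sum_congr rfl fun j _ => ?_
  rw [permMat_mul_apply]
  have h := TI_pow i m (Equiv.swap j i) 1 (Equiv.swap j i * π)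
  rw [mul_one, Equiv.swap_mul_self_mul] at h
  rw [one_mul]
  exact h

lemma swap_eq_iff' {a b t u : Fin k} : Equiv.swap a b t = u ↔ t = Equiv.swap a b u :=
  ⟨fun h => by rw [← h, Equiv.swap_apply_self], fun h => by rw [h, Equiv.swap_apply_self]⟩

lemma Spin_succ (i : Fin k) (m : ℕ) (t : Fin k) :
    Spin k i (m + 1) t
      = ∑ j ∈ Finset.univ.filter (fun j => j < i), Spin k i m (Equiv.swap j i t) := by
  unfold Spin
  have h1 : ∀ π : Equiv.Perm (Fin k),
      (if π i = t then (jmMat k i ^ (m + 1)) 1 π else 0)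
        = ∑ j ∈ Finset.univ.filter (fun j => j < i),
            (if π i = t then (jmMat k i ^ m) 1 (Equiv.swap j i * π) else 0) := by
    intro π
    by_cases h : π i = t
    · rw [if_pos h, pow_entry_rec]
      exact Finset.sum_congr rfl fun j _ => by rw [if_pos h]
    · rw [if_neg h]
      exact (Finset.sum_eq_zero fun j _ => by rw [if_neg h]).symm
  rw [Finset.sum_congr rfl fun π _ => h1 π, Finset.sum_comm]
  refine Finset.sum_congr rfl fun j _ => ?_
  refine Fintype.sum_equiv (Equiv.mulLeft (Equiv.swap j i)) _ _ (fun π => ?_)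
  simp only [Equiv.coe_mulLeft]
  refine if_congr ?_ rfl rfl
  rw [Equiv.Perm.mul_apply]
  exact ⟨fun h => congrArg _ h, fun h => (Equiv.swap j i).injective h⟩

lemma Spin_zero (i : Fin k) (t : Fin k) :
    Spin k i 0 t = if i = t then 1 else 0 := by
  unfold Spin
  rw [pow_zero]
  rw [Finset.sum_eq_single (1 : Equiv.Perm (Fin k))]
  · rw [Matrix.one_apply_eq]
    simp
    congr
  · intro π _ hπ
    rw [Matrix.one_apply_ne (fun h => hπ h.symm)]
    simp
  · intro h; exact absurd (Finset.mem_univ _) h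

lemma Spin_nonneg (i : Fin k) (m : ℕ) (t : Fin k) : 0 ≤ Spin k i m t := by
  refine Finset.sum_nonneg fun π _ => ?_
  by_cases h : π i = t
  · rw [if_pos h]; exact jmMat_pow_nonneg i m 1 π
  · rw [if_neg h]

lemma Spin_le (i : Fin k) (m : ℕ) : ∀ t, Spin k i (m + 1) t ≤ (nJ k i : ℝ) ^ m := by
  induction m with
  | zero =>
    intro t
    rw [Spin_succ, pow_zero]
    have h1 : ∀ j ∈ Finset.univ.filter (fun j => j < i),
        Spin k i 0 (Equiv.swap j i t) = if j = t then 1 else 0 := by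
      intro j _
      rw [Spin_zero]
      refine if_congr ?_ rfl rfl
      constructor
      · intro h
        have h2 := congrArg (Equiv.swap j i) h
        rwa [Equiv.swap_apply_right, Equiv.swap_apply_self] at h2
      · intro h
        rw [← h, Equiv.swap_apply_left]
    rw [Finset.sum_congr rfl h1, Finset.sum_ite_eq' (Finset.univ.filter (fun j => j < i)) t
      (fun _ => (1 : ℝ))]
    by_cases h : t ∈ Finset.univ.filter (fun j => j < i)
    · rw [if_pos h]
    · rw [if_neg h]; norm_num
  | succ m ih =>
    intro t
    rw [Spin_succ]
    calc ∑ j ∈ Finset.univ.filter (fun j => j < i), Spin k i (m + 1) (Equiv.swap j i t)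
        ≤ ∑ j ∈ Finset.univ.filter (fun j => j < i), (nJ k i : ℝ) ^ m :=
          Finset.sum_le_sum fun j _ => ih (Equiv.swap j i t)
      _ = (nJ k i : ℝ) ^ (m + 1) := by
          rw [Finset.sum_const, nsmul_eq_mul, pow_succ']
          rfl

lemma Spin_one_self (i : Fin k) : Spin k i 1 i = 0 := by
  rw [Spin_succ]
  refine Finset.sum_eq_zero fun j hj => ?_
  rw [Equiv.swap_apply_right, Spin_zero, if_neg]
  intro h
  exact absurd ((Finset.mem_filter.1 hj).2) (h ▸ lt_irrefl i)

variable (D : ℕ)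

lemma summable_spin_series (i : Fin k) (hD : (nJ k i : ℝ) < (D : ℝ)) (t : Fin k) :
    Summable (fun m : ℕ => ((D : ℝ)⁻¹) ^ (m + 1) * Spin k i (m + 1) t) := by
  have hD0 : (0 : ℝ) < (D : ℝ) := lt_of_le_of_lt (Nat.cast_nonneg _) hD
  refine Summable.of_nonneg_of_le
    (fun m => mul_nonneg (by positivity) (Spin_nonneg i (m + 1) t)) (fun m => ?_)
    ((summable_geometric_of_lt_one (r := (nJ k i : ℝ) / D) (by positivity)
      ((div_lt_one hD0).2 hD)).mul_left ((D : ℝ)⁻¹))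
  calc ((D : ℝ)⁻¹) ^ (m + 1) * Spin k i (m + 1) t
      ≤ ((D : ℝ)⁻¹) ^ (m + 1) * ((nJ k i : ℝ)) ^ m :=
        mul_le_mul_of_nonneg_left (Spin_le i m t) (by positivity)
    _ = (D : ℝ)⁻¹ * ((nJ k i : ℝ) / D) ^ m := by
        rw [pow_succ', mul_assoc, ← mul_pow, div_eq_mul_inv, mul_comm ((nJ k i : ℝ)) _]

/-- The deviation of the row of `Binv` at the identity from the delta function. -/
noncomputable def rfun (k D : ℕ) (i : Fin k) (π : Equiv.Perm (Fin k)) : ℝ :=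
  Binv k D i 1 π - (if π = 1 then 1 else 0)

lemma abs_signed_term (i : Fin k) (m : ℕ) (σ τ : Equiv.Perm (Fin k)) :
    |(-(D : ℝ)⁻¹) ^ m * ((jmMat k i ^ m) σ τ)|
      = ((D : ℝ)⁻¹) ^ m * ((jmMat k i ^ m) σ τ) := by
  rw [abs_mul, abs_pow, abs_neg, abs_inv, Nat.abs_cast,
    abs_of_nonneg (jmMat_pow_nonneg i m σ τ)]

lemma rfun_abs_le (i : Fin k) (hD : (nJ k i : ℝ) < (D : ℝ)) (π : Equiv.Perm (Fin k)) :
    |rfun k D i π| ≤ ∑' m : ℕ, ((D : ℝ)⁻¹) ^ (m + 1) * ((jmMat k i ^ (m + 1)) 1 π) := by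
  have hsum := summable_signed_series D i hD 1 π
  have hr : rfun k D i π = ∑' m : ℕ, (-(D : ℝ)⁻¹) ^ (m + 1) * ((jmMat k i ^ (m + 1)) 1 π) := by
    unfold rfun Binv
    rw [Summable.tsum_eq_zero_add hsum, pow_zero, one_mul]
    have hone : ((1 : Matrix (Equiv.Perm (Fin k)) (Equiv.Perm (Fin k)) ℝ) 1 π)
        = (if π = 1 then (1 : ℝ) else 0) := by
      by_cases h : π = 1
      · rw [if_pos h, h, Matrix.one_apply_eq]
      · rw [if_neg h, Matrix.one_apply_ne (fun hc => h hc.symm)]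
    rw [pow_zero, hone]
    ring
  rw [hr]
  have hs : Summable (fun m : ℕ =>
      ‖(-(D : ℝ)⁻¹) ^ (m + 1) * ((jmMat k i ^ (m + 1)) 1 π)‖) := by
    have := (summable_nat_add_iff 1).2 (summable_abs_series D i hD 1 π)
    refine this.congr fun m => ?_
    rw [Real.norm_eq_abs, abs_signed_term]
  calc |∑' m : ℕ, (-(D : ℝ)⁻¹) ^ (m + 1) * ((jmMat k i ^ (m + 1)) 1 π)|
      ≤ ∑' m : ℕ, ‖(-(D : ℝ)⁻¹) ^ (m + 1) * ((jmMat k i ^ (m + 1)) 1 π)‖ := by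
        rw [← Real.norm_eq_abs]
        exact norm_tsum_le_tsum_norm hs
    _ = ∑' m : ℕ, ((D : ℝ)⁻¹) ^ (m + 1) * ((jmMat k i ^ (m + 1)) 1 π) :=
        tsum_congr fun m => by rw [Real.norm_eq_abs, abs_signed_term]

lemma rfun_pinned_sum (i : Fin k) (hD : (nJ k i : ℝ) < (D : ℝ)) (t : Fin k) :
    ∑ π : Equiv.Perm (Fin k), (if π i = t then |rfun k D i π| else 0)
      ≤ ∑' m : ℕ, ((D : ℝ)⁻¹) ^ (m + 1) * Spin k i (m + 1) t := by
  have hsummand : ∀ π : Equiv.Perm (Fin k), Summable (fun m : ℕ =>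
      ((D : ℝ)⁻¹) ^ (m + 1) * (if π i = t then ((jmMat k i ^ (m + 1)) 1 π) else 0)) := by
    intro π
    by_cases h : π i = t
    · simp only [if_pos h]
      exact ((summable_nat_add_iff 1).2 (summable_abs_series D i hD 1 π)).congr
        (fun m => rfl)
    · simp only [if_neg h, mul_zero]
      exact summable_zero
  have step1 : ∀ π : Equiv.Perm (Fin k), (if π i = t then |rfun k D i π| else 0)
      ≤ ∑' m : ℕ, ((D : ℝ)⁻¹) ^ (m + 1) * (if π i = t then ((jmMat k i ^ (m + 1)) 1 π) else 0) := by
    intro π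
    by_cases h : π i = t
    · simp only [if_pos h]
      exact rfun_abs_le D i hD π
    · simp only [if_neg h, mul_zero, tsum_zero, le_refl]
  calc ∑ π : Equiv.Perm (Fin k), (if π i = t then |rfun k D i π| else 0)
      ≤ ∑ π : Equiv.Perm (Fin k), ∑' m : ℕ,
          ((D : ℝ)⁻¹) ^ (m + 1) * (if π i = t then ((jmMat k i ^ (m + 1)) 1 π) else 0) :=
        Finset.sum_le_sum fun π _ => step1 π
    _ = ∑' m : ℕ, ∑ π : Equiv.Perm (Fin k),
          ((D : ℝ)⁻¹) ^ (m + 1) * (if π i = t then ((jmMat k i ^ (m + 1)) 1 π) else 0) :=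
        (Summable.tsum_finsetSum (fun π _ => hsummand π)).symm
    _ = ∑' m : ℕ, ((D : ℝ)⁻¹) ^ (m + 1) * Spin k i (m + 1) t := by
        refine tsum_congr fun m => ?_
        unfold Spin
        rw [Finset.mul_sum]

lemma pow_prod_aux (a n : ℝ) (m : ℕ) :
    a ^ (m + 2) * n ^ (m + 1) = (n * a ^ 2) * (n * a) ^ m := by
  rw [mul_pow, pow_add, pow_succ]; ring

lemma pow_prod_aux2 (a n : ℝ) (m : ℕ) :
    a ^ (m + 1) * n ^ m = a * (n * a) ^ m := by
  rw [mul_pow, pow_succ']; ring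

lemma tsum_geom_aux (c r : ℝ) (h0 : 0 ≤ r) (h1 : r < 1) :
    ∑' m : ℕ, c * r ^ m = c * (1 - r)⁻¹ := by
  rw [tsum_mul_left, tsum_geometric_of_lt_one h0 h1]

lemma geom_inv_le_two {r : ℝ} (h0 : 0 ≤ r) (h2 : r ≤ 1 / 2) : (1 - r)⁻¹ ≤ 2 := by
  have h : (1 / 2 : ℝ) ≤ 1 - r := by linarith
  calc (1 - r)⁻¹ ≤ (1 / 2 : ℝ)⁻¹ := by
        apply inv_anti₀ (by norm_num) h
    _ = 2 := by norm_num

lemma core_summable (g : ℕ → ℝ) (n Dr : ℝ) (hg0 : ∀ m, 0 ≤ g m)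
    (hgle : ∀ m, g m ≤ n ^ m) (hn0 : 0 ≤ n) (hr1 : n / Dr < 1) (hDpos : 0 < Dr) :
    Summable (fun m : ℕ => (Dr⁻¹) ^ (m + 1) * g m) := by
  have hr0 : 0 ≤ n / Dr := by positivity
  refine Summable.of_nonneg_of_le (fun m => mul_nonneg (by positivity) (hg0 m)) (fun m => ?_)
    ((summable_geometric_of_lt_one hr0 hr1).mul_left (Dr⁻¹))
  calc (Dr⁻¹) ^ (m + 1) * g m ≤ (Dr⁻¹) ^ (m + 1) * n ^ m :=
        mul_le_mul_of_nonneg_left (hgle m) (by positivity)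
    _ = Dr⁻¹ * (n / Dr) ^ m := by
        rw [div_eq_mul_inv]
        exact pow_prod_aux2 _ _ m

lemma gamma_core (g : ℕ → ℝ) (n Dr : ℝ) (hg0 : ∀ m, 0 ≤ g m)
    (hgle : ∀ m, g m ≤ n ^ m) (hn0 : 0 ≤ n) (h2n : 2 * n ≤ Dr) (hDr : 2 ≤ Dr) :
    ∑' m : ℕ, (Dr⁻¹) ^ (m + 1) * g m ≤ 1 := by
  have hDpos : (0 : ℝ) < Dr := lt_of_lt_of_le (by norm_num) hDr
  have hr2 : n / Dr ≤ 1 / 2 := by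
    rw [div_le_div_iff₀ hDpos (by norm_num)]
    linarith
  have hr0 : 0 ≤ n / Dr := by positivity
  have hr1 : n / Dr < 1 := lt_of_le_of_lt hr2 (by norm_num)
  calc ∑' m : ℕ, (Dr⁻¹) ^ (m + 1) * g m
      ≤ ∑' m : ℕ, Dr⁻¹ * (n / Dr) ^ m := by
        refine Summable.tsum_le_tsum (fun m => ?_)
          (core_summable g n Dr hg0 hgle hn0 hr1 hDpos)
          ((summable_geometric_of_lt_one hr0 hr1).mul_left (Dr⁻¹))
        calc (Dr⁻¹) ^ (m + 1) * g m ≤ (Dr⁻¹) ^ (m + 1) * n ^ m :=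
              mul_le_mul_of_nonneg_left (hgle m) (by positivity)
          _ = Dr⁻¹ * (n / Dr) ^ m := by
              rw [div_eq_mul_inv]; exact pow_prod_aux2 _ _ m
    _ = Dr⁻¹ * (1 - n / Dr)⁻¹ := tsum_geom_aux _ _ hr0 hr1
    _ ≤ Dr⁻¹ * 2 := mul_le_mul_of_nonneg_left (geom_inv_le_two hr0 hr2) (by positivity)
    _ ≤ 1 := by
        rw [inv_mul_eq_div, div_le_one hDpos]
        exact hDr

lemma beta_core (g : ℕ → ℝ) (n Dr : ℝ) (hg0 : ∀ m, 0 ≤ g m)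
    (hgle : ∀ m, g m ≤ n ^ m) (hg00 : g 0 = 0) (hn0 : 0 ≤ n) (h2n : 2 * n ≤ Dr)
    (hDr : 2 ≤ Dr) :
    ∑' m : ℕ, (Dr⁻¹) ^ (m + 1) * g m ≤ 2 * n / Dr ^ 2 := by
  have hDpos : (0 : ℝ) < Dr := lt_of_lt_of_le (by norm_num) hDr
  have hr2 : n / Dr ≤ 1 / 2 := by
    rw [div_le_div_iff₀ hDpos (by norm_num)]
    linarith
  have hr0 : 0 ≤ n / Dr := by positivity
  have hr1 : n / Dr < 1 := lt_of_le_of_lt hr2 (by norm_num)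
  rw [Summable.tsum_eq_zero_add (core_summable g n Dr hg0 hgle hn0 hr1 hDpos), hg00, mul_zero, zero_add]
  have hle : ∀ m : ℕ, (Dr⁻¹) ^ (m + 1 + 1) * g (m + 1) ≤ (n / Dr ^ 2) * (n / Dr) ^ m := by
    intro m
    calc (Dr⁻¹) ^ (m + 1 + 1) * g (m + 1)
        ≤ (Dr⁻¹) ^ (m + 2) * n ^ (m + 1) :=
          mul_le_mul_of_nonneg_left (hgle (m + 1)) (by positivity)
      _ = (n / Dr ^ 2) * (n / Dr) ^ m := by
          rw [div_eq_mul_inv, div_eq_mul_inv, ← inv_pow]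
          exact pow_prod_aux _ _ m
  have hsum2 : Summable (fun m : ℕ => (n / Dr ^ 2) * (n / Dr) ^ m) :=
    (summable_geometric_of_lt_one hr0 hr1).mul_left _
  have hsum1 : Summable (fun m : ℕ => (Dr⁻¹) ^ (m + 1 + 1) * g (m + 1)) :=
    Summable.of_nonneg_of_le (fun m => mul_nonneg (by positivity) (hg0 (m + 1))) hle hsum2
  calc ∑' m : ℕ, (Dr⁻¹) ^ (m + 1 + 1) * g (m + 1)
      ≤ ∑' m : ℕ, (n / Dr ^ 2) * (n / Dr) ^ m := Summable.tsum_le_tsum hle hsum1 hsum2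
    _ = (n / Dr ^ 2) * (1 - n / Dr)⁻¹ := tsum_geom_aux _ _ hr0 hr1
    _ ≤ (n / Dr ^ 2) * 2 :=
        mul_le_mul_of_nonneg_left (geom_inv_le_two hr0 hr2) (by positivity)
    _ = 2 * n / Dr ^ 2 := by ring

lemma beta_le (i : Fin k) (h2n : 2 * (nJ k i : ℝ) ≤ (D : ℝ)) (hDr : (2 : ℝ) ≤ (D : ℝ)) :
    ∑' m : ℕ, ((D : ℝ)⁻¹) ^ (m + 1) * Spin k i (m + 1) i
      ≤ 2 * (nJ k i : ℝ) / (D : ℝ) ^ 2 :=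
  beta_core (fun m => Spin k i (m + 1) i) (nJ k i : ℝ) (D : ℝ)
    (fun m => Spin_nonneg i (m + 1) i) (fun m => Spin_le i m i) (Spin_one_self i)
    (Nat.cast_nonneg _) h2n hDr

lemma gamma_le (i : Fin k) (h2n : 2 * (nJ k i : ℝ) ≤ (D : ℝ)) (hDr : (2 : ℝ) ≤ (D : ℝ))
    (t : Fin k) :
    ∑' m : ℕ, ((D : ℝ)⁻¹) ^ (m + 1) * Spin k i (m + 1) t ≤ 1 :=
  gamma_core (fun m => Spin k i (m + 1) t) (nJ k i : ℝ) (D : ℝ)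
    (fun m => Spin_nonneg i (m + 1) t) (fun m => Spin_le i m t)
    (Nat.cast_nonneg _) h2n hDr

lemma pow_entry_fix (i : Fin k) (m : ℕ) :
    ∀ π : Equiv.Perm (Fin k), ¬ Fix k ((i : ℕ) + 1) π → (jmMat k i ^ m) 1 π = 0 := by
  induction m with
  | zero =>
    intro π h
    rw [pow_zero]
    refine Matrix.one_apply_ne fun heq => ?_
    exact h (heq ▸ fix_one _)
  | succ m ih =>
    intro π h
    rw [pow_entry_rec]
    refine Finset.sum_eq_zero fun j hj => ?_
    by_contra hne
    have hfix : Fix k ((i : ℕ) + 1) (Equiv.swap j i * π) := by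
      by_contra hf; exact hne (ih _ hf)
    apply h
    have hji : j < i := (Finset.mem_filter.1 hj).2
    have hs : Fix k ((i : ℕ) + 1) (Equiv.swap j i) := by
      intro u hu
      have huj : u ≠ j := by
        intro hc
        rw [Fin.lt_def] at hji
        rw [hc] at hu; omega
      have hui : u ≠ i := by
        intro hc
        rw [hc] at hu; omega
      exact Equiv.swap_apply_of_ne_of_ne huj hui
    have hmul := fix_mul hs hfix
    rwa [Equiv.swap_mul_self_mul] at hmul

lemma Binv_entry_fix (i : Fin k) (π : Equiv.Perm (Fin k)) (h : ¬ Fix k ((i : ℕ) + 1) π) :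
    Binv k D i 1 π = 0 := by
  unfold Binv
  have hz : ∀ m : ℕ, (-(D : ℝ)⁻¹) ^ m * ((jmMat k i ^ m) 1 π) = 0 := fun m => by
    rw [pow_entry_fix i m π h, mul_zero]
  exact (tsum_congr hz).trans tsum_zero


lemma abs_est_aux2 {a S c mc : ℝ} (ha : |a| ≤ 1 + mc) (hS : |S| ≤ c * (1 + mc))
    (hmc : mc ≤ 1) (hc : 0 ≤ c) : |a + S| ≤ 1 + (mc + 2 * c) := by
  refine le_trans (abs_add_le _ _) ?_
  nlinarith

lemma abs_est_aux3 {a S c mc : ℝ} (ha : |a - 1| ≤ mc) (hS : |S| ≤ c * (1 + mc))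
    (hmc : mc ≤ 1) (hc : 0 ≤ c) : |a + S - 1| ≤ mc + 2 * c := by
  have heq : a + S - 1 = (a - 1) + S := by ring
  rw [heq]
  refine le_trans (abs_add_le _ _) ?_
  nlinarith

lemma main_est (k D : ℕ) (hk1 : 1 ≤ k) (h2k : 2 * (k : ℝ) ≤ (D : ℝ))
    (hkc : 4 * (k : ℝ) ^ 2 ≤ (D : ℝ) ^ 2)
    (m : ℕ) (hmk : m ≤ k) :
    (∀ x : Equiv.Perm (Fin k), ¬ Fix k m x → Qmat k D m 1 x = 0) ∧
    (∀ x : Equiv.Perm (Fin k),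
      |Qmat k D m 1 x| ≤ 1 + 2 * (m : ℝ) * (2 * (k : ℝ) / (D : ℝ) ^ 2)) ∧
    |Qmat k D m 1 1 - 1| ≤ 2 * (m : ℝ) * (2 * (k : ℝ) / (D : ℝ) ^ 2) := by
  have hk1' : (1 : ℝ) ≤ (k : ℝ) := by exact_mod_cast hk1
  have hD2 : (2 : ℝ) ≤ (D : ℝ) := by linarith
  have hDpos : (0 : ℝ) < (D : ℝ) := by linarith
  have hc0 : (0 : ℝ) ≤ 2 * (k : ℝ) / (D : ℝ) ^ 2 := by positivity
  induction m with
  | zero =>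
    have hQ0 : Qmat k D 0 = 1 := by unfold Qmat; simp
    refine ⟨?_, ?_, ?_⟩
    · intro x hx
      rw [hQ0]
      refine Matrix.one_apply_ne fun h => ?_
      exact hx (h ▸ fix_one 0)
    · intro x
      rw [hQ0]
      have hb : |(1 : Matrix (Equiv.Perm (Fin k)) (Equiv.Perm (Fin k)) ℝ) 1 x| ≤ 1 := by
        by_cases h : (1 : Equiv.Perm (Fin k)) = x
        · rw [Matrix.one_apply, if_pos h]; norm_num
        · rw [Matrix.one_apply, if_neg h]; norm_num
      calc |(1 : Matrix (Equiv.Perm (Fin k)) (Equiv.Perm (Fin k)) ℝ) 1 x| ≤ 1 := hb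
        _ ≤ 1 + 2 * ((0 : ℕ) : ℝ) * (2 * (k : ℝ) / (D : ℝ) ^ 2) := by norm_num
    · rw [hQ0, Matrix.one_apply_eq]
      norm_num
  | succ m ih =>
    have hm : m < k := hmk
    obtain ⟨ih1, ih2, ih3⟩ := ih (le_of_lt hm)
    have hmk' : (m : ℝ) ≤ (k : ℝ) := by exact_mod_cast le_of_lt hm
    have hm0 : (0 : ℝ) ≤ (m : ℝ) := Nat.cast_nonneg m
    have h4 : 4 * (k : ℝ) ^ 2 / (D : ℝ) ^ 2 ≤ 1 := by
      rw [div_le_one (by positivity)]; exact hkc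
    have hmc : 2 * (m : ℝ) * (2 * (k : ℝ) / (D : ℝ) ^ 2) ≤ 1 := by
      have hstep : 2 * (m : ℝ) * (2 * (k : ℝ) / (D : ℝ) ^ 2)
          ≤ 2 * (k : ℝ) * (2 * (k : ℝ) / (D : ℝ) ^ 2) :=
        mul_le_mul_of_nonneg_right (by linarith) hc0
      have heq : 2 * (k : ℝ) * (2 * (k : ℝ) / (D : ℝ) ^ 2)
          = 4 * (k : ℝ) ^ 2 / (D : ℝ) ^ 2 := by ring
      linarith [heq ▸ hstep]
    set i : Fin k := ⟨m, hm⟩ with hidef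
    have hnJ : (nJ k i : ℝ) < (k : ℝ) := by exact_mod_cast nJ_lt i
    have h2nJ : 2 * (nJ k i : ℝ) ≤ (D : ℝ) := by linarith
    have hnJD : (nJ k i : ℝ) < (D : ℝ) := by linarith
    have hentry : ∀ x : Equiv.Perm (Fin k),
        Qmat k D (m + 1) 1 x
          = ∑ π : Equiv.Perm (Fin k), Binv k D i 1 π * Qmat k D m 1 (π⁻¹ * x) := by
      intro x
      rw [Qmat_succ D m hm, Matrix.mul_apply]
      refine Finset.sum_congr rfl fun π _ => ?_
      congr 1
      have h := (TI_Qmat D m) π⁻¹ π x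
      rw [inv_mul_cancel] at h
      exact h.symm
    have hsupp : ∀ x : Equiv.Perm (Fin k), ¬ Fix k (m + 1) x → Qmat k D (m + 1) 1 x = 0 := by
      intro x hx
      rw [hentry x]
      refine Finset.sum_eq_zero fun π _ => ?_
      by_cases hB : Fix k (m + 1) π
      · by_cases hq : Fix k m (π⁻¹ * x)
        · exfalso
          apply hx
          have hfm := fix_mul hB (fix_mono hq)
          rwa [mul_inv_cancel_left] at hfm
        · rw [ih1 _ hq, mul_zero]
      · rw [Binv_entry_fix D i π hB, zero_mul]
    have hfixval : ∀ y : Equiv.Perm (Fin k), Fix k m y → y i = i := fun y hy => hy i le_rfl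
    have hrestrict : ∀ x : Equiv.Perm (Fin k),
        Qmat k D (m + 1) 1 x
          = ∑ π ∈ Finset.univ.filter (fun π : Equiv.Perm (Fin k) => π i = x i),
              Binv k D i 1 π * Qmat k D m 1 (π⁻¹ * x) := by
      intro x
      rw [hentry x]
      refine (Finset.sum_filter_of_ne fun π _ hne => ?_).symm
      by_contra hni
      apply hne
      have hq : ¬ Fix k m (π⁻¹ * x) := by
        intro hfix
        apply hni
        have hv := hfixval _ hfix
        rw [Equiv.Perm.mul_apply] at hv
        have h2 := congrArg π hv
        rw [show π (π⁻¹ (x i)) = x i from π.apply_symm_apply _] at h2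
        exact h2.symm
      rw [ih1 _ hq, mul_zero]
    have hsplit : ∀ π : Equiv.Perm (Fin k),
        Binv k D i 1 π = (if π = 1 then (1 : ℝ) else 0) + rfun k D i π := by
      intro π; unfold rfun; ring
    have hpinned : ∀ t : Fin k,
        ∑ π ∈ Finset.univ.filter (fun π : Equiv.Perm (Fin k) => π i = t), |rfun k D i π|
          ≤ ∑' mm : ℕ, ((D : ℝ)⁻¹) ^ (mm + 1) * Spin k i (mm + 1) t := by
      intro t
      rw [Finset.sum_filter]
      exact rfun_pinned_sum D i hnJD t
    have hbeta : ∑ π ∈ Finset.univ.filter (fun π : Equiv.Perm (Fin k) => π i = i),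
        |rfun k D i π| ≤ 2 * (k : ℝ) / (D : ℝ) ^ 2 := by
      calc ∑ π ∈ Finset.univ.filter (fun π : Equiv.Perm (Fin k) => π i = i), |rfun k D i π|
          ≤ ∑' mm : ℕ, ((D : ℝ)⁻¹) ^ (mm + 1) * Spin k i (mm + 1) i := hpinned i
        _ ≤ 2 * (nJ k i : ℝ) / (D : ℝ) ^ 2 := beta_le D i h2nJ hD2
        _ ≤ 2 * (k : ℝ) / (D : ℝ) ^ 2 := by
            gcongr
    have hgamma : ∀ t : Fin k,
        ∑ π ∈ Finset.univ.filter (fun π : Equiv.Perm (Fin k) => π i = t), |rfun k D i π|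
          ≤ 1 := fun t => le_trans (hpinned t) (gamma_le D i h2nJ hD2 t)
    have hrbound : ∀ x : Equiv.Perm (Fin k),
        |∑ π ∈ Finset.univ.filter (fun π : Equiv.Perm (Fin k) => π i = x i),
            rfun k D i π * Qmat k D m 1 (π⁻¹ * x)|
          ≤ (∑ π ∈ Finset.univ.filter (fun π : Equiv.Perm (Fin k) => π i = x i),
              |rfun k D i π|) * (1 + 2 * (m : ℝ) * (2 * (k : ℝ) / (D : ℝ) ^ 2)) := by
      intro x
      calc |∑ π ∈ Finset.univ.filter (fun π : Equiv.Perm (Fin k) => π i = x i),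
            rfun k D i π * Qmat k D m 1 (π⁻¹ * x)|
          ≤ ∑ π ∈ Finset.univ.filter (fun π : Equiv.Perm (Fin k) => π i = x i),
              |rfun k D i π * Qmat k D m 1 (π⁻¹ * x)| := Finset.abs_sum_le_sum_abs _ _
        _ ≤ ∑ π ∈ Finset.univ.filter (fun π : Equiv.Perm (Fin k) => π i = x i),
              |rfun k D i π| * (1 + 2 * (m : ℝ) * (2 * (k : ℝ) / (D : ℝ) ^ 2)) := by
            refine Finset.sum_le_sum fun π _ => ?_
            rw [abs_mul]
            exact mul_le_mul_of_nonneg_left (ih2 (π⁻¹ * x)) (abs_nonneg _)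
        _ = (∑ π ∈ Finset.univ.filter (fun π : Equiv.Perm (Fin k) => π i = x i),
              |rfun k D i π|) * (1 + 2 * (m : ℝ) * (2 * (k : ℝ) / (D : ℝ) ^ 2)) := by
            rw [← Finset.sum_mul]
    have hdecomp : ∀ x : Equiv.Perm (Fin k),
        Qmat k D (m + 1) 1 x
          = (if x i = i then Qmat k D m 1 x else 0)
            + ∑ π ∈ Finset.univ.filter (fun π : Equiv.Perm (Fin k) => π i = x i),
                rfun k D i π * Qmat k D m 1 (π⁻¹ * x) := by
      intro x
      rw [hrestrict x,
        Finset.sum_congr rfl fun π _ => by rw [hsplit π, add_mul]]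
      rw [Finset.sum_add_distrib]
      congr 1
      simp only [ite_mul, one_mul, zero_mul]
      rw [Finset.sum_ite_eq' _ (1 : Equiv.Perm (Fin k)) (fun π => Qmat k D m 1 (π⁻¹ * x))]
      have hmem : ((1 : Equiv.Perm (Fin k))
          ∈ Finset.univ.filter (fun π : Equiv.Perm (Fin k) => π i = x i)) ↔ x i = i := by
        rw [Finset.mem_filter]
        simp [eq_comm]
      by_cases h : x i = i
      · rw [if_pos (hmem.2 h), if_pos h, inv_one, one_mul]
      · rw [if_neg (fun hc => h (hmem.1 hc)), if_neg h]
    have hsucc_cast : 2 * ((m + 1 : ℕ) : ℝ) * (2 * (k : ℝ) / (D : ℝ) ^ 2)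
        = 2 * (m : ℝ) * (2 * (k : ℝ) / (D : ℝ) ^ 2)
          + 2 * (2 * (k : ℝ) / (D : ℝ) ^ 2) := by push_cast; ring
    refine ⟨hsupp, ?_, ?_⟩
    · intro x
      rw [hdecomp x, hsucc_cast]
      by_cases h : x i = i
      · rw [if_pos h]
        have hsum_le : (∑ π ∈ Finset.univ.filter (fun π : Equiv.Perm (Fin k) => π i = x i),
            |rfun k D i π|) ≤ 2 * (k : ℝ) / (D : ℝ) ^ 2 := by
          rw [h]; exact hbeta
        have h2 := le_trans (hrbound x) (mul_le_mul_of_nonneg_right hsum_le (by positivity))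
        exact abs_est_aux2 (ih2 x) h2 hmc hc0
      · rw [if_neg h, zero_add]
        have h2 := le_trans (hrbound x)
          (mul_le_mul_of_nonneg_right (hgamma (x i)) (by positivity))
        rw [one_mul] at h2
        nlinarith [hc0, h2]
    · rw [hdecomp 1, hsucc_cast]
      have hone : ((1 : Equiv.Perm (Fin k))) i = i := rfl
      rw [if_pos hone]
      have hsum_le : (∑ π ∈ Finset.univ.filter
          (fun π : Equiv.Perm (Fin k) => π i = (1 : Equiv.Perm (Fin k)) i), |rfun k D i π|)
          ≤ 2 * (k : ℝ) / (D : ℝ) ^ 2 := by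
        simp only [Equiv.Perm.one_apply]
        exact hbeta
      have h2 := le_trans (hrbound 1) (mul_le_mul_of_nonneg_right hsum_le (by positivity))
      exact abs_est_aux3 ih3 h2 hmc hc0

end WgAux

/-- There is a universal constant `C > 0` such that for all `k ≥ 1` and
`D > √6 · k^{7/4}`, the Gram matrix `G_D` is invertible and the unitary Weingarten function
at the identity, `Wg^U(id, D) = (G_D⁻¹)(id, id)`, satisfies
`|Wg^U(id, D) − D^{−k}| ≤ C · k^{7/2} · D^{−(k+2)}`. -/
theorem weingarten_identity_estimate :
    ∃ C : ℝ, 0 < C ∧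
      ∀ (k D : ℕ), 1 ≤ k → Real.sqrt 6 * (k : ℝ) ^ ((7 : ℝ) / 4) < (D : ℝ) →
        IsUnit (permGram k D) ∧
        |(permGram k D)⁻¹ 1 1 - ((D : ℝ) ^ k)⁻¹|
          ≤ C * (k : ℝ) ^ ((7 : ℝ) / 2) * ((D : ℝ) ^ (k + 2))⁻¹ := by
  refine ⟨4, by norm_num, ?_⟩
  intro k D hk hD
  have hk1' : (1 : ℝ) ≤ (k : ℝ) := by exact_mod_cast hk
  have hkpos : (0 : ℝ) < (k : ℝ) := by linarith
  have hs6 : (2 : ℝ) ≤ Real.sqrt 6 := by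
    rw [show (2 : ℝ) = Real.sqrt 4 by
      rw [show (4 : ℝ) = 2 ^ 2 by norm_num, Real.sqrt_sq (by norm_num : (0:ℝ) ≤ 2)]]
    exact Real.sqrt_le_sqrt (by norm_num)
  have hk74 : (k : ℝ) ≤ (k : ℝ) ^ ((7 : ℝ) / 4) := by
    have h := Real.rpow_le_rpow_of_exponent_le hk1' (by norm_num : (1 : ℝ) ≤ 7 / 4)
    rwa [Real.rpow_one] at h
  have hsqrt_nonneg : (0 : ℝ) ≤ Real.sqrt 6 := Real.sqrt_nonneg 6
  have h2k : 2 * (k : ℝ) ≤ (D : ℝ) := by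
    have h1 : 2 * (k : ℝ) ≤ Real.sqrt 6 * (k : ℝ) :=
      mul_le_mul_of_nonneg_right hs6 (by linarith)
    have h2 : Real.sqrt 6 * (k : ℝ) ≤ Real.sqrt 6 * (k : ℝ) ^ ((7 : ℝ) / 4) :=
      mul_le_mul_of_nonneg_left hk74 hsqrt_nonneg
    linarith
  have hkD : (k : ℝ) ≤ (D : ℝ) := by linarith
  have hDpos : (0 : ℝ) < (D : ℝ) := by linarith
  have hD0 : (D : ℝ) ≠ 0 := ne_of_gt hDpos
  have hxx : ((k : ℝ) ^ ((7 : ℝ) / 4)) ^ (2 : ℕ) = (k : ℝ) ^ ((7 : ℝ) / 2) := by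
    rw [← Real.rpow_natCast ((k : ℝ) ^ ((7 : ℝ) / 4)) 2, ← Real.rpow_mul (le_of_lt hkpos)]
    norm_num
  have hsq : 6 * (k : ℝ) ^ ((7 : ℝ) / 2) ≤ (D : ℝ) ^ 2 := by
    have h1 : (Real.sqrt 6 * (k : ℝ) ^ ((7 : ℝ) / 4)) ^ 2 ≤ (D : ℝ) ^ 2 :=
      pow_le_pow_left₀ (by positivity) (le_of_lt hD) 2
    have h2 : (Real.sqrt 6 * (k : ℝ) ^ ((7 : ℝ) / 4)) ^ 2 = 6 * (k : ℝ) ^ ((7 : ℝ) / 2) := by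
      rw [mul_pow, Real.sq_sqrt (by norm_num : (0 : ℝ) ≤ 6), hxx]
    linarith
  have hk2 : (k : ℝ) ^ 2 ≤ (k : ℝ) ^ ((7 : ℝ) / 2) := by
    have h := Real.rpow_le_rpow_of_exponent_le hk1' (by norm_num : (2 : ℝ) ≤ 7 / 2)
    rw [show (k : ℝ) ^ (2 : ℝ) = (k : ℝ) ^ (2 : ℕ) by
      rw [← Real.rpow_natCast (k : ℝ) 2]; norm_num] at h
    exact h
  have hk720 : (0 : ℝ) ≤ (k : ℝ) ^ ((7 : ℝ) / 2) := by positivity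
  have hkc : 4 * (k : ℝ) ^ 2 ≤ (D : ℝ) ^ 2 := by nlinarith
  refine ⟨WgAux.isUnit_permGram D hkD hD0, ?_⟩
  rw [WgAux.permGram_inv_eq D hkD hD0, WgAux.Wmat_eq k D, Matrix.smul_apply, smul_eq_mul]
  obtain ⟨-, -, hq⟩ := WgAux.main_est k D hk h2k hkc k le_rfl
  rw [← inv_pow]
  have he2 : ((D : ℝ)⁻¹) ^ k * WgAux.Qmat k D k 1 1 - ((D : ℝ)⁻¹) ^ k
      = ((D : ℝ)⁻¹) ^ k * (WgAux.Qmat k D k 1 1 - 1) := by ring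
  rw [he2, abs_mul, abs_of_nonneg (by positivity : (0 : ℝ) ≤ ((D : ℝ)⁻¹) ^ k)]
  have hpos : (0 : ℝ) ≤ ((D : ℝ) ^ (k + 2))⁻¹ := by positivity
  calc ((D : ℝ)⁻¹) ^ k * |WgAux.Qmat k D k 1 1 - 1|
      ≤ ((D : ℝ)⁻¹) ^ k * (2 * (k : ℝ) * (2 * (k : ℝ) / (D : ℝ) ^ 2)) :=
        mul_le_mul_of_nonneg_left hq (by positivity)
    _ = 4 * (k : ℝ) ^ 2 * ((D : ℝ) ^ (k + 2))⁻¹ := by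
        rw [pow_add, mul_inv, inv_pow]
        ring
    _ ≤ 4 * (k : ℝ) ^ ((7 : ℝ) / 2) * ((D : ℝ) ^ (k + 2))⁻¹ :=
        mul_le_mul_of_nonneg_right (by linarith) hpos
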